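/- Let $M^1_t$ and $M^2_t$ be smooth mean curvature flows with $M^2_t$ contained in a tubular neighborhood of $M^1_t$, written as a normal graph $M^2_t=\{x+u(x,t)N(x,t): x\in M^1_t\}$ with inner unit normal $N$. Then at points where $\nabla u = 0$ and with $|A|\,|u|\le \epsilon$ for the second fundamental form $A$ of $M^1_t$, the evolution satisfies $|u_t - \Delta_{M^1} u - |A|^2 u| \le C(|A||u|)\,|\nabla^2 u| + C(|A||u|)^2|A|$ for a dimensional constant $C$. -/
import Mathlib


open Finset

set_option maxHeartbeats 1000000 in
/-- pointwise consequence of Lemma 4.5: if `u` satisfies the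
structural normal-graph equation
`u_t = (1+ε) Σ (δ_{ij}+L_{ij}) ∂ᵢ∂ⱼu + |A|² u - Σ Q_{ij} A_{ij}`
at a point where `∇u = 0`, with `|ε|, |L_{ij}| ≤ D|A||u|`,
`|Q_{ij}| ≤ (D|A||u|)²`, `|A_{ij}| ≤ |A|`, and `|A||u| ≤ 1`, then
`|u_t - Δu - |A|²u| ≤ C (|A||u|) |∇²u| + C (|A||u|)² |A|` for a constant `C`
depending only on the dimension `n` and `D`.  Here `ut, lap, a, uval` denote the
values of `u_t`, `Δu`, `|A|`, `u` at the point, and `H` the Hessian `∇²u`. -/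
theorem graph_pde_pointwise (n : ℕ) (D : ℝ) (hD : 0 < D) :
    ∃ C > 0, ∀ (ut lap a uval ε : ℝ) (L Q A H : Fin n → Fin n → ℝ),
      0 ≤ a →
      |ε| ≤ D * (a * |uval|) →
      (∀ i j, |L i j| ≤ D * (a * |uval|)) →
      (∀ i j, |Q i j| ≤ (D * (a * |uval|)) ^ 2) →
      (∀ i j, |A i j| ≤ a) →
      lap = ∑ i, H i i →
      a * |uval| ≤ 1 →
      ut = (1 + ε) * (∑ i, ∑ j, ((if i = j then (1:ℝ) else 0) + L i j) * H i j)
        + a ^ 2 * uval - ∑ i, ∑ j, Q i j * A i j →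
      |ut - lap - a ^ 2 * uval| ≤
        C * (a * |uval|) * (∑ i, ∑ j, |H i j|) + C * (a * |uval|) ^ 2 * a := by
  refine ⟨D * (2 + D) + n ^ 2 * D ^ 2 + 1, by positivity, ?_⟩
  intro ut lap a uval ε L Q A H ha hε hL hQ hA hlap hsmall hut
  set m : ℝ := a * |uval| with hm
  have hm0 : 0 ≤ m := by positivity
  set S : ℝ := ∑ i, ∑ j, |H i j| with hSdef
  have hS0 : 0 ≤ S := Finset.sum_nonneg fun i _ =>
    Finset.sum_nonneg fun j _ => abs_nonneg _
  set T : ℝ := ∑ i, ∑ j, L i j * H i j with hTdef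
  set R : ℝ := ∑ i, ∑ j, Q i j * A i j with hRdef
  -- split the sum
  have hsplit : (∑ i, ∑ j, ((if i = j then (1:ℝ) else 0) + L i j) * H i j)
      = lap + T := by
    rw [hlap, hTdef, ← Finset.sum_add_distrib]
    refine Finset.sum_congr rfl fun i _ => ?_
    simp [add_mul, ite_mul, Finset.sum_add_distrib, Finset.sum_ite_eq]
  have hkey : ut - lap - a ^ 2 * uval = ε * lap + (1 + ε) * T - R := by
    rw [hut, hsplit]; ring
  -- bounds
  have hlapb : |lap| ≤ S := by
    rw [hlap]
    calc |∑ i, H i i| ≤ ∑ i, |H i i| := Finset.abs_sum_le_sum_abs _ _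
      _ ≤ S := Finset.sum_le_sum fun i _ =>
        Finset.single_le_sum (f := fun j => |H i j|)
          (fun j _ => abs_nonneg _) (Finset.mem_univ i)
  have hTb : |T| ≤ D * m * S := by
    calc |T| ≤ ∑ i, ∑ j, |L i j * H i j| := by
          refine (Finset.abs_sum_le_sum_abs _ _).trans ?_
          exact Finset.sum_le_sum fun i _ => Finset.abs_sum_le_sum_abs _ _
      _ ≤ ∑ i, ∑ j, D * m * |H i j| := by
          refine Finset.sum_le_sum fun i _ => Finset.sum_le_sum fun j _ => ?_
          rw [abs_mul]
          exact mul_le_mul_of_nonneg_right (hL i j) (abs_nonneg _)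
      _ = D * m * S := by rw [hSdef, Finset.mul_sum]; simp [Finset.mul_sum]
  have hRb : |R| ≤ (n : ℝ) ^ 2 * ((D * m) ^ 2 * a) := by
    calc |R| ≤ ∑ i, ∑ j, |Q i j * A i j| := by
          refine (Finset.abs_sum_le_sum_abs _ _).trans ?_
          exact Finset.sum_le_sum fun i _ => Finset.abs_sum_le_sum_abs _ _
      _ ≤ ∑ i : Fin n, ∑ j : Fin n, (D * m) ^ 2 * a := by
          refine Finset.sum_le_sum fun i _ => Finset.sum_le_sum fun j _ => ?_
          rw [abs_mul]
          exact mul_le_mul (hQ i j) (hA i j) (abs_nonneg _) (by positivity)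
      _ = (n : ℝ) ^ 2 * ((D * m) ^ 2 * a) := by
          simp [Finset.sum_const]; ring
  have hDm : D * m ≤ D := by nlinarith
  have habs : |ut - lap - a ^ 2 * uval| ≤ |ε| * |lap| + |1 + ε| * |T| + |R| := by
    rw [hkey]
    calc |ε * lap + (1 + ε) * T - R| ≤ |ε * lap + (1 + ε) * T| + |R| :=
          abs_sub _ _
      _ ≤ |ε * lap| + |(1 + ε) * T| + |R| := by
          gcongr; exact abs_add_le _ _
      _ = |ε| * |lap| + |1 + ε| * |T| + |R| := by rw [abs_mul, abs_mul]
  have h1ε : |1 + ε| ≤ 1 + D := by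
    calc |1 + ε| ≤ |(1:ℝ)| + |ε| := abs_add_le _ _
      _ ≤ 1 + D := by rw [abs_one]; linarith [hε.trans hDm]
  have hεb : |ε| ≤ D * m := hε
  have h1 : |ε| * |lap| ≤ D * m * S :=
    mul_le_mul hεb hlapb (abs_nonneg _) (by positivity)
  have h2 : |1 + ε| * |T| ≤ (1 + D) * (D * m * S) :=
    mul_le_mul h1ε hTb (abs_nonneg _) (by positivity)
  have hma : 0 ≤ m ^ 2 * a := by positivity
  calc |ut - lap - a ^ 2 * uval| ≤ |ε| * |lap| + |1 + ε| * |T| + |R| := habs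
    _ ≤ D * m * S + (1 + D) * (D * m * S) + (n : ℝ) ^ 2 * ((D * m) ^ 2 * a) := by
        gcongr
    _ = (D * (2 + D)) * (m * S) + ((n : ℝ) ^ 2 * D ^ 2) * (m ^ 2 * a) := by ring
    _ ≤ (D * (2 + D) + n ^ 2 * D ^ 2 + 1) * (m * S)
        + (D * (2 + D) + n ^ 2 * D ^ 2 + 1) * (m ^ 2 * a) := by
        have hmS : 0 ≤ m * S := mul_nonneg hm0 hS0
        have hn2 : (0:ℝ) ≤ (n:ℝ) ^ 2 := by positivity
        gcongr <;> nlinarith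
    _ = (D * (2 + D) + n ^ 2 * D ^ 2 + 1) * m * S
        + (D * (2 + D) + n ^ 2 * D ^ 2 + 1) * m ^ 2 * a := by ring
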